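/- Let G be a simple graph on a finite vertex set of n vertices and let i be a natural number. Then the number of maximal independent sets of G of cardinality exactly i is at most 2^(n − i). -/

import Mathlib

namespace Stmt3Aux

variable {V : Type*}

def Ind (G : SimpleGraph V) (s : Finset V) : Prop := ∀ u ∈ s, ∀ w ∈ s, ¬ G.Adj u w

def MIS (G : SimpleGraph V) (W : Finset V) (i : ℕ) : Set (Finset V) :=
  {s | s ⊆ W ∧ Ind G s ∧ (∀ t, t ⊆ W → Ind G t → s ⊆ t → t = s) ∧ s.card = i}

lemma ind_subset {G : SimpleGraph V} {s t : Finset V} (h : t ⊆ s) (hs : Ind G s) : Ind G t :=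
  fun u hu w hw => hs u (h hu) w (h hw)

lemma misB [DecidableEq V] {G : SimpleGraph V} {W : Finset V} {i : ℕ} {v : V}
    {s : Finset V} (hs : s ∈ MIS G W i) (hv : v ∉ s) : s ∈ MIS G (W.erase v) i := by
  obtain ⟨hsub, hind, hmax, hcard⟩ := hs
  refine ⟨?_, hind, ?_, hcard⟩
  · intro u hu; exact Finset.mem_erase.mpr ⟨fun h => hv (h ▸ hu), hsub hu⟩
  · intro t ht hti hst
    exact hmax t (ht.trans (Finset.erase_subset _ _)) hti hst

lemma misA [DecidableEq V] {G : SimpleGraph V} [DecidableRel G.Adj] {W : Finset V} {i : ℕ}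
    {v : V} {s : Finset V} (hs : s ∈ MIS G W i) (hv : v ∈ s) :
    s.erase v ∈ MIS G ((W.erase v).filter (fun u => ¬ G.Adj v u)) (i - 1) := by
  obtain ⟨hsub, hind, hmax, hcard⟩ := hs
  refine ⟨?_, ind_subset (Finset.erase_subset _ _) hind, ?_,
    by rw [Finset.card_erase_of_mem hv, hcard]⟩
  · intro u hu
    obtain ⟨hne, hus⟩ := Finset.mem_erase.mp hu
    exact Finset.mem_filter.mpr ⟨Finset.mem_erase.mpr ⟨hne, hsub hus⟩, hind v hv u hus⟩
  · intro t ht hti hst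
    have hvt : v ∉ t := fun h => (Finset.mem_erase.mp (Finset.mem_filter.mp (ht h)).1).1 rfl
    have hWt : insert v t ⊆ W := by
      intro u hu
      rcases Finset.mem_insert.mp hu with rfl | hu
      · exact hsub hv
      · exact (Finset.erase_subset _ _) (Finset.mem_filter.mp (ht hu)).1
    have hIt : Ind G (insert v t) := by
      have hnadj : ∀ u ∈ t, ¬ G.Adj v u := fun u hu => (Finset.mem_filter.mp (ht hu)).2
      intro a ha b hb
      rcases Finset.mem_insert.mp ha with ha' | ha' <;> rcases Finset.mem_insert.mp hb with hb' | hb'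
      · subst ha'; subst hb'; exact G.loopless.irrefl _
      · subst ha'; exact hnadj b hb'
      · subst hb'; exact fun h => hnadj a ha' (G.adj_symm h)
      · exact hti a ha' b hb'
    have hseq : insert v t = s := hmax _ hWt hIt (by
      intro u hu
      by_cases h : u = v
      · exact Finset.mem_insert.mpr (Or.inl h)
      · exact Finset.mem_insert.mpr (Or.inr (hst (Finset.mem_erase.mpr ⟨h, hu⟩))))
    apply Finset.Subset.antisymm _ hst
    intro u hu
    refine Finset.mem_erase.mpr ⟨fun h => hvt (h ▸ hu), ?_⟩
    rw [← hseq]; exact Finset.mem_insert_of_mem hu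

lemma mis_trivial [Fintype V] (G : SimpleGraph V) (W : Finset V) (i : ℕ) (h : W.card ≤ i) :
    (MIS G W i).ncard ≤ 2 ^ (W.card - i) := by
  have hsub : MIS G W i ⊆ {W} := by
    rintro s ⟨hsW, _, _, hcard⟩
    have : W.card ≤ s.card := hcard ▸ h
    simp [Finset.eq_of_subset_of_card_le hsW this]
  calc (MIS G W i).ncard ≤ ({W} : Set (Finset V)).ncard := Set.ncard_le_ncard hsub (Set.toFinite _)
    _ = 1 := Set.ncard_singleton _
    _ ≤ 2 ^ (W.card - i) := Nat.one_le_two_pow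

lemma mis_bound [Fintype V] [DecidableEq V] (G : SimpleGraph V) [DecidableRel G.Adj] :
    ∀ n (W : Finset V), W.card ≤ n → ∀ i, (MIS G W i).ncard ≤ 2 ^ (W.card - i) := by
  intro n
  induction n with
  | zero =>
    intro W hW i
    exact mis_trivial G W i (le_trans hW (Nat.zero_le i))
  | succ n ih =>
    intro W hW i
    by_cases hia : W.card ≤ i
    · exact mis_trivial G W i hia
    push_neg at hia
    have hW1 : 1 ≤ W.card := by omega
    obtain ⟨v, hv⟩ := Finset.card_pos.mp hW1
    by_cases hi0 : i = 0
    · -- no maximal independent set of size 0 in a nonempty W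
      have : MIS G W i = ∅ := by
        ext s
        simp only [Set.mem_empty_iff_false, iff_false]
        rintro ⟨hsW, _, hmax, hcard⟩
        have hs0 : s = ∅ := Finset.card_eq_zero.mp (hi0 ▸ hcard)
        have hIv : Ind G ({v} : Finset V) := by
          intro u hu w hw
          rw [Finset.mem_singleton.mp hu, Finset.mem_singleton.mp hw]
          exact G.loopless.irrefl v
        have := hmax {v} (Finset.singleton_subset_iff.mpr hv) hIv (hs0 ▸ Finset.empty_subset _)
        simp [hs0] at this
      rw [this]
      simp
    have hi1 : 1 ≤ i := by omega
    -- split according to whether v belongs to the set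
    set A : Set (Finset V) := {s ∈ MIS G W i | v ∈ s} with hA
    set B : Set (Finset V) := {s ∈ MIS G W i | v ∉ s} with hB
    have hunion : MIS G W i = A ∪ B := by
      ext s; by_cases h : v ∈ s <;> simp [hA, hB, h]
    set W' : Finset V := (W.erase v).filter (fun u => ¬ G.Adj v u) with hW'
    -- bound for A via erasing v
    have hAcard : A.ncard ≤ 2 ^ (W'.card - (i - 1)) := by
      have hinj : Set.InjOn (fun s : Finset V => s.erase v) A := by
        rintro s ⟨_, hvs⟩ s' ⟨_, hvs'⟩ h
        have := congrArg (insert v) h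
        rwa [Finset.insert_erase hvs, Finset.insert_erase hvs'] at this
      have himg : (fun s : Finset V => s.erase v) '' A ⊆ MIS G W' (i - 1) := by
        rintro _ ⟨s, ⟨hsM, hvs⟩, rfl⟩
        exact misA hsM hvs
      have hWn : W'.card ≤ n := by
        have h1 : W' ⊆ W.erase v := Finset.filter_subset _ _
        have h2 : (W.erase v).card = W.card - 1 := Finset.card_erase_of_mem hv
        have := Finset.card_le_card h1
        omega
      calc A.ncard = ((fun s : Finset V => s.erase v) '' A).ncard :=
            (Set.ncard_image_of_injOn hinj).symm
        _ ≤ (MIS G W' (i - 1)).ncard := Set.ncard_le_ncard himg (Set.toFinite _)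
        _ ≤ 2 ^ (W'.card - (i - 1)) := ih W' hWn (i - 1)
    -- bound for B via erasing v from W
    have hBcard : B.ncard ≤ 2 ^ ((W.card - 1) - i) := by
      have hsub : B ⊆ MIS G (W.erase v) i := by
        rintro s ⟨hsM, hvs⟩
        exact misB hsM hvs
      have hWn : (W.erase v).card ≤ n := by
        rw [Finset.card_erase_of_mem hv]; omega
      calc B.ncard ≤ (MIS G (W.erase v) i).ncard := Set.ncard_le_ncard hsub (Set.toFinite _)
        _ ≤ 2 ^ ((W.erase v).card - i) := ih _ hWn i
        _ = 2 ^ ((W.card - 1) - i) := by rw [Finset.card_erase_of_mem hv]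
    have hW'le : W'.card ≤ W.card - 1 := by
      have h1 := Finset.card_le_card (Finset.filter_subset (fun u => ¬ G.Adj v u) (W.erase v))
      rw [Finset.card_erase_of_mem hv] at h1
      exact h1
    rw [hunion]
    by_cases hnb : ∃ w ∈ W, G.Adj v w
    · -- v has a neighbour w in W; then W'.card ≤ W.card - 2
      obtain ⟨w, hwW, hadj⟩ := hnb
      have hwv : w ≠ v := fun h => G.loopless.irrefl v (h ▸ hadj)
      have hW'2 : W'.card ≤ W.card - 2 := by
        have hsub2 : W' ⊆ (W.erase v).erase w := by
          intro u hu
          obtain ⟨hu1, hu2⟩ := Finset.mem_filter.mp hu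
          refine Finset.mem_erase.mpr ⟨?_, hu1⟩
          rintro rfl; exact hu2 hadj
        have hcard2 : ((W.erase v).erase w).card = W.card - 2 := by
          rw [Finset.card_erase_of_mem (Finset.mem_erase.mpr ⟨hwv, hwW⟩),
            Finset.card_erase_of_mem hv]
          omega
        have := Finset.card_le_card hsub2
        omega
      have e1 : 2 ^ (W'.card - (i - 1)) ≤ 2 ^ (W.card - i - 1) :=
        Nat.pow_le_pow_right (by norm_num) (by omega)
      have e2 : 2 ^ ((W.card - 1) - i) ≤ 2 ^ (W.card - i - 1) :=
        Nat.pow_le_pow_right (by norm_num) (by omega)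
      have efin : 2 ^ (W.card - i - 1) + 2 ^ (W.card - i - 1) = 2 ^ (W.card - i) := by
        rw [← two_mul, ← pow_succ']
        congr 1
        omega
      calc (A ∪ B).ncard ≤ A.ncard + B.ncard := Set.ncard_union_le A B
        _ ≤ 2 ^ (W.card - i - 1) + 2 ^ (W.card - i - 1) := by
            exact Nat.add_le_add (le_trans hAcard e1) (le_trans hBcard e2)
        _ = 2 ^ (W.card - i) := efin
    · -- v has no neighbour in W: every maximal independent set contains v, so B = ∅
      push_neg at hnb
      have hBempty : B = ∅ := by
        ext s
        simp only [Set.mem_empty_iff_false, iff_false]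
        rintro ⟨⟨hsW, hind, hmax, hcard⟩, hvs⟩
        have hWt : insert v s ⊆ W := Finset.insert_subset hv hsW
        have hIt : Ind G (insert v s) := by
          intro a ha b hb
          rcases Finset.mem_insert.mp ha with ha' | ha' <;>
            rcases Finset.mem_insert.mp hb with hb' | hb'
          · subst ha'; subst hb'; exact G.loopless.irrefl _
          · subst ha'; exact hnb b (hsW hb')
          · subst hb'; exact fun h => hnb a (hsW ha') (G.adj_symm h)
          · exact hind a ha' b hb'
        have := hmax _ hWt hIt (Finset.subset_insert _ _)
        exact hvs (this ▸ Finset.mem_insert_self v s)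
      have e1 : 2 ^ (W'.card - (i - 1)) ≤ 2 ^ (W.card - i) :=
        Nat.pow_le_pow_right (by norm_num) (by omega)
      calc (A ∪ B).ncard ≤ A.ncard + B.ncard := Set.ncard_union_le A B
        _ = A.ncard := by rw [hBempty]; simp
        _ ≤ 2 ^ (W.card - i) := le_trans hAcard e1

end Stmt3Aux

/-- The number of maximal independent sets of cardinality exactly `i` in an
`n`-vertex graph `G` is at most `2 ^ (n - i)`. -/
theorem stmt3 {V : Type*} [Fintype V] (G : SimpleGraph V) (i : ℕ) :
    ({s : Finset V | (∀ u ∈ s, ∀ v ∈ s, ¬ G.Adj u v) ∧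
        (∀ t : Finset V, (∀ u ∈ t, ∀ v ∈ t, ¬ G.Adj u v) → s ⊆ t → t = s) ∧
        s.card = i}.ncard)
      ≤ 2 ^ (Fintype.card V - i) := by
  classical
  have hset : {s : Finset V | (∀ u ∈ s, ∀ v ∈ s, ¬ G.Adj u v) ∧
        (∀ t : Finset V, (∀ u ∈ t, ∀ v ∈ t, ¬ G.Adj u v) → s ⊆ t → t = s) ∧
        s.card = i} = Stmt3Aux.MIS G Finset.univ i := by
    ext s
    constructor
    · rintro ⟨h1, h2, h3⟩
      exact ⟨Finset.subset_univ s, h1, fun t _ ht hst => h2 t ht hst, h3⟩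
    · rintro ⟨_, h1, h2, h3⟩
      exact ⟨h1, fun t ht hst => h2 t (Finset.subset_univ t) ht hst, h3⟩
  rw [hset]
  have := Stmt3Aux.mis_bound G (Fintype.card V) Finset.univ (le_of_eq Finset.card_univ) i
  rwa [Finset.card_univ] at this
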